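/- Let 1 < Γ ≤ 2, ρ > 0, p > 0, and h = 1 + Γp/((Γ−1)ρ), with sound speed c_s = √(Γp/(ρh)). Then 0 < c_s ≤ √(Γ−1), and ρh c_s/(1 + c_s) − p > p(Γ/(Γ−1+√(Γ−1)) − 1) ≥ 0. -/

import Mathlib

/-- For the ideal EOS with adiabatic index Γ ∈ (1,2]: 0 < c_s ≤ √(Γ-1) and
ρh c_s/(1+c_s) - p > p(Γ/(Γ-1+√(Γ-1)) - 1) ≥ 0. -/
theorem stmt14 (Γ ρ p h cs : ℝ) (hΓ1 : 1 < Γ) (hΓ2 : Γ ≤ 2)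
    (hρ : 0 < ρ) (hp : 0 < p)
    (hh : h = 1 + Γ * p / ((Γ - 1) * ρ))
    (hcs : cs = Real.sqrt (Γ * p / (ρ * h))) :
    0 < cs ∧ cs ≤ Real.sqrt (Γ - 1) ∧
    ρ * h * cs / (1 + cs) - p > p * (Γ / (Γ - 1 + Real.sqrt (Γ - 1)) - 1) ∧
    p * (Γ / (Γ - 1 + Real.sqrt (Γ - 1)) - 1) ≥ 0 := by
  have hΓ' : 0 < Γ - 1 := by linarith
  have hΓ0 : 0 < Γ := by linarith
  set s := Real.sqrt (Γ - 1) with hsdef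
  have hs0 : 0 < s := Real.sqrt_pos.mpr hΓ'
  have hs2 : s ^ 2 = Γ - 1 := Real.sq_sqrt hΓ'.le
  have hs1 : s ≤ 1 := by nlinarith
  have hh0 : 0 < h := by
    rw [hh]
    have : 0 < Γ * p / ((Γ - 1) * ρ) := by positivity
    linarith
  have hq : 0 < Γ * p / (ρ * h) := by positivity
  have hcs0 : 0 < cs := by rw [hcs]; exact Real.sqrt_pos.mpr hq
  have hcs2 : cs ^ 2 = Γ * p / (ρ * h) := by rw [hcs]; exact Real.sq_sqrt hq.le
  have key : ρ * h * cs ^ 2 = Γ * p := by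
    field_simp at hcs2; linarith [hcs2]
  -- cs < s
  have hρh : (Γ - 1) * (ρ * h) = (Γ - 1) * ρ + Γ * p := by
    rw [hh]; field_simp
  have hcslt : cs < s := by
    have h2 : cs ^ 2 < s ^ 2 := by
      rw [hs2]
      have : ρ * h * cs ^ 2 * (Γ - 1) = Γ * p * (Γ - 1) := by rw [key]
      nlinarith [mul_pos hρ hh0, mul_pos hΓ' hρ]
    nlinarith
  have hden : 0 < 1 + cs := by linarith
  have hden2 : 0 < Γ - 1 + s := by linarith
  refine ⟨hcs0, hcslt.le, ?_, ?_⟩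
  · have h1 : p * Γ / (Γ - 1 + s) < ρ * h * cs / (1 + cs) := by
      rw [div_lt_div_iff₀ hden2 hden, ← mul_lt_mul_iff_of_pos_right hcs0]
      have key2 : ρ * h * cs ^ 2 * (Γ - 1 + s) = Γ * p * (s ^ 2 + s) := by
        rw [key, hs2]
      nlinarith [key2, mul_pos (mul_pos hΓ0 hp) (sub_pos.2 hcslt),
        mul_pos (mul_pos (mul_pos hΓ0 hp) (sub_pos.2 hcslt)) (by positivity : (0:ℝ) < s + cs)]
    have e : p * (Γ / (Γ - 1 + s) - 1) = p * Γ / (Γ - 1 + s) - p := by ring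
    rw [gt_iff_lt, e]
    linarith
  · have h2 : (1 : ℝ) ≤ Γ / (Γ - 1 + s) := by
      rw [le_div_iff₀ hden2]; linarith
    nlinarith
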